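/- For each j ∈ {x,y,z}, the function p_j ↦ C(p_x,p_y,p_z) = H(p_z) − H((p_o+1)/2) (with the other two coordinates fixed, p_o = sqrt(4(p_x²+p_y²+p_z²−p_x−p_y−p_z)+3)) is nonincreasing on the region where p_j ≤ 1/2 and nondecreasing on the region where p_j ≥ 1/2; in particular, for fixed p_x and p_y, its minimum over admissible p_j is attained at p_j = 1/2. -/

import Mathlib

open Real

/-- binary Shannon entropy (base 2) -/
noncomputable def H2 (p : ℝ) : ℝ := -(p * Real.logb 2 p) - (1 - p) * Real.logb 2 (1 - p)

/-- the qubit coherence function `C(pₓ,p_y,p_z) = H(p_z) - H((p_o+1)/2)` -/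
noncomputable def Cfun (px py pz : ℝ) : ℝ :=
  H2 pz - H2 ((Real.sqrt (4*(px^2 + py^2 + pz^2 - px - py - pz) + 3) + 1) / 2)

/-- admissibility: the Bloch vector `(2pₓ-1, 2p_y-1, 2p_z-1)` lies in the Bloch ball -/
def Adm (px py pz : ℝ) : Prop :=
  (2*px - 1)^2 + (2*py - 1)^2 + (2*pz - 1)^2 ≤ 1

lemma H2_eq (p : ℝ) : H2 p = binEntropy p / Real.log 2 := by
  simp [H2, binEntropy, Real.logb, Real.log_inv]
  ring

lemma H2_fun_eq : H2 = fun p => binEntropy p / Real.log 2 := funext H2_eq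

lemma H2_continuous : Continuous H2 := by
  rw [H2_fun_eq]; exact binEntropy_continuous.div_const _

lemma H2_one_sub (p : ℝ) : H2 (1 - p) = H2 p := by
  rw [H2_eq, H2_eq, Real.binEntropy_one_sub]

lemma H2_antitoneOn : AntitoneOn H2 (Set.Icc (1/2 : ℝ) 1) := by
  have h : AntitoneOn binEntropy (Set.Icc (2⁻¹ : ℝ) 1) :=
    Real.binEntropy_strictAntiOn.antitoneOn
  intro a ha b hb hab
  rw [H2_eq, H2_eq]
  have : binEntropy b ≤ binEntropy a := by
    apply h _ _ hab
    · simpa [one_div] using ha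
    · simpa [one_div] using hb
  exact div_le_div_of_nonneg_right this (Real.log_nonneg one_le_two)

lemma hasDerivAt_H2 {p : ℝ} (h0 : p ≠ 0) (h1 : p ≠ 1) :
    HasDerivAt H2 ((Real.log (1 - p) - Real.log p) / Real.log 2) p := by
  rw [H2_fun_eq]
  exact (Real.hasDerivAt_binEntropy h0 h1).div_const _

/-- the function `log((1+t)/(1-t))` -/
noncomputable def Lf (t : ℝ) : ℝ := Real.log (1 + t) - Real.log (1 - t)

lemma Lf_zero : Lf 0 = 0 := by simp [Lf]

lemma hasDerivAt_Lf {t : ℝ} (h1 : -1 < t) (h2 : t < 1) :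
    HasDerivAt Lf (2 / (1 - t^2)) t := by
  have ha : HasDerivAt (fun t : ℝ => 1 + t) 1 t := (hasDerivAt_id t).const_add 1
  have hb : HasDerivAt (fun t : ℝ => 1 - t) (-1) t := by
    exact (hasDerivAt_id t).const_sub 1
  have hA : HasDerivAt (fun t : ℝ => Real.log (1 + t)) (1 / (1 + t)) t :=
    ha.log (by linarith)
  have hB : HasDerivAt (fun t : ℝ => Real.log (1 - t)) ((-1) / (1 - t)) t :=
    hb.log (by linarith)
  have h := hA.sub hB
  have hne1 : (1:ℝ) + t ≠ 0 := by linarith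
  have hne2 : (1:ℝ) - t ≠ 0 := by linarith
  have hne3 : (1:ℝ) - t ^ 2 ≠ 0 := by nlinarith
  have heq : 1 / (1 + t) - (-1) / (1 - t) = 2 / (1 - t ^ 2) := by
    rw [div_sub_div _ _ hne1 hne2]
    congr 1 <;> ring
  show HasDerivAt (fun t => Real.log (1 + t) - Real.log (1 - t)) (2 / (1 - t ^ 2)) t
  rw [← heq]
  exact h

lemma convexOn_Lf : ConvexOn ℝ (Set.Ico (0:ℝ) 1) Lf := by
  apply MonotoneOn.convexOn_of_deriv (convex_Ico 0 1)
  · intro x hx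
    apply ContinuousAt.continuousWithinAt
    exact (hasDerivAt_Lf (by linarith [hx.1]) hx.2).continuousAt
  · rw [interior_Ico]
    intro x hx
    exact (hasDerivAt_Lf (by linarith [hx.1]) hx.2).differentiableAt.differentiableWithinAt
  · rw [interior_Ico]
    intro a ha b hb hab
    rw [(hasDerivAt_Lf (by linarith [ha.1]) ha.2).deriv,
      (hasDerivAt_Lf (by linarith [hb.1]) hb.2).deriv]
    have h1 : (0:ℝ) < 1 - b^2 := by nlinarith [hb.1, hb.2]
    have h2 : 1 - b^2 ≤ 1 - a^2 := by nlinarith [ha.1]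
    gcongr

lemma key_ineq {c r : ℝ} (hc : 0 ≤ c) (hcr : c ≤ r) (hr1 : r < 1) :
    r * Lf c ≤ c * Lf r := by
  rcases eq_or_lt_of_le (hc.trans hcr) with h | hr0
  · have hc0 : c = 0 := le_antisymm (hcr.trans h.ge) hc
    simp [hc0, ← h, Lf_zero]
  · have hθ0 : 0 ≤ c / r := div_nonneg hc hr0.le
    have hθ1 : c / r ≤ 1 := (div_le_one hr0).2 hcr
    have hmem_r : r ∈ Set.Ico (0:ℝ) 1 := ⟨hr0.le, hr1⟩
    have hmem_0 : (0:ℝ) ∈ Set.Ico (0:ℝ) 1 := ⟨le_refl _, one_pos⟩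
    have h := convexOn_Lf.2 hmem_r hmem_0 hθ0 (show (0:ℝ) ≤ 1 - c/r by linarith)
      (show c/r + (1 - c/r) = 1 by ring)
    simp only [smul_eq_mul, mul_zero, add_zero, Lf_zero] at h
    rw [div_mul_cancel₀ _ hr0.ne'] at h
    calc r * Lf c ≤ r * (c / r * Lf r) := by nlinarith
      _ = c * Lf r := by field_simp

lemma log2_pos : (0:ℝ) < Real.log 2 := Real.log_pos one_lt_two

lemma z_mono (k2 : ℝ) (hk2 : 0 ≤ k2) :
    MonotoneOn (fun c => H2 ((1 + c) / 2) - H2 ((Real.sqrt (k2 + c^2) + 1) / 2))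
      (Set.Icc (0:ℝ) (Real.sqrt (1 - k2))) := by
  apply monotoneOn_of_deriv_nonneg (convex_Icc _ _)
  · apply Continuous.continuousOn
    apply Continuous.sub
    · exact H2_continuous.comp (by continuity)
    · exact H2_continuous.comp (by continuity)
  · rw [interior_Icc]
    intro x hx
    obtain ⟨hx0, hxs⟩ := hx
    have h1k2 : 0 < 1 - k2 := Real.sqrt_pos.mp (hx0.trans hxs)
    have hx2 : x^2 < 1 - k2 := by
      nlinarith [Real.sq_sqrt h1k2.le, hx0, hxs]
    have hx1 : x < 1 := by nlinarith
    have hkx : (0:ℝ) < k2 + x^2 := by nlinarith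
    have hrx : x ≤ Real.sqrt (k2 + x^2) := by
      calc x = Real.sqrt (x^2) := (Real.sqrt_sq hx0.le).symm
        _ ≤ _ := Real.sqrt_le_sqrt (by linarith)
    have hr0 : 0 < Real.sqrt (k2 + x^2) := lt_of_lt_of_le hx0 hrx
    have hr1 : Real.sqrt (k2 + x^2) < 1 := by
      calc Real.sqrt (k2 + x^2) < Real.sqrt 1 := Real.sqrt_lt_sqrt hkx.le (by linarith)
        _ = 1 := Real.sqrt_one
    have inner1 : HasDerivAt (fun c : ℝ => (1 + c) / 2) (1/2) x := by
      simpa using ((hasDerivAt_id x).const_add 1).div_const 2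
    have compA : HasDerivAt (fun c : ℝ => H2 ((1 + c) / 2))
        ((Real.log (1 - (1 + x)/2) - Real.log ((1 + x)/2)) / Real.log 2 * (1/2)) x :=
      (hasDerivAt_H2 (by linarith) (by linarith)).comp x inner1
    have hq : HasDerivAt (fun c : ℝ => k2 + c^2) (2*x) x := by
      simpa using ((hasDerivAt_pow 2 x).const_add k2)
    have hsq : HasDerivAt (fun c : ℝ => Real.sqrt (k2 + c^2))
        (1 / (2 * Real.sqrt (k2 + x^2)) * (2*x)) x :=
      (Real.hasDerivAt_sqrt hkx.ne').comp x hq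
    have inner2 : HasDerivAt (fun c : ℝ => (Real.sqrt (k2 + c^2) + 1) / 2)
        (x / (2 * Real.sqrt (k2 + x^2))) x := by
      have h : HasDerivAt (fun c : ℝ => (Real.sqrt (k2 + c^2) + 1) / 2)
          (1 / (2 * Real.sqrt (k2 + x^2)) * (2*x) / 2) x := (hsq.add_const 1).div_const 2
      convert h using 1
      field_simp
    have compB : HasDerivAt (fun c : ℝ => H2 ((Real.sqrt (k2 + c^2) + 1) / 2))
        ((Real.log (1 - (Real.sqrt (k2 + x^2) + 1)/2) -
            Real.log ((Real.sqrt (k2 + x^2) + 1)/2)) / Real.log 2 *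
          (x / (2 * Real.sqrt (k2 + x^2)))) x :=
      (hasDerivAt_H2 (by positivity) (by
        intro hcon
        have : Real.sqrt (k2 + x^2) = 1 := by linarith [hcon ▸ (rfl : (1:ℝ) = 1)]
        · nlinarith
        )).comp x inner2
    exact (compA.sub compB).differentiableAt.differentiableWithinAt
  · rw [interior_Icc]
    intro x hx
    obtain ⟨hx0, hxs⟩ := hx
    have h1k2 : 0 < 1 - k2 := Real.sqrt_pos.mp (hx0.trans hxs)
    have hx2 : x^2 < 1 - k2 := by
      nlinarith [Real.sq_sqrt h1k2.le, hx0, hxs]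
    have hx1 : x < 1 := by nlinarith
    have hkx : (0:ℝ) < k2 + x^2 := by nlinarith
    have hrx : x ≤ Real.sqrt (k2 + x^2) := by
      calc x = Real.sqrt (x^2) := (Real.sqrt_sq hx0.le).symm
        _ ≤ _ := Real.sqrt_le_sqrt (by linarith)
    have hr0 : 0 < Real.sqrt (k2 + x^2) := lt_of_lt_of_le hx0 hrx
    have hr1 : Real.sqrt (k2 + x^2) < 1 := by
      calc Real.sqrt (k2 + x^2) < Real.sqrt 1 := Real.sqrt_lt_sqrt hkx.le (by linarith)
        _ = 1 := Real.sqrt_one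
    have inner1 : HasDerivAt (fun c : ℝ => (1 + c) / 2) (1/2) x := by
      simpa using ((hasDerivAt_id x).const_add 1).div_const 2
    have compA : HasDerivAt (fun c : ℝ => H2 ((1 + c) / 2))
        ((Real.log (1 - (1 + x)/2) - Real.log ((1 + x)/2)) / Real.log 2 * (1/2)) x :=
      (hasDerivAt_H2 (by linarith) (by linarith)).comp x inner1
    have hq : HasDerivAt (fun c : ℝ => k2 + c^2) (2*x) x := by
      simpa using ((hasDerivAt_pow 2 x).const_add k2)
    have hsq : HasDerivAt (fun c : ℝ => Real.sqrt (k2 + c^2))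
        (1 / (2 * Real.sqrt (k2 + x^2)) * (2*x)) x :=
      (Real.hasDerivAt_sqrt hkx.ne').comp x hq
    have inner2 : HasDerivAt (fun c : ℝ => (Real.sqrt (k2 + c^2) + 1) / 2)
        (x / (2 * Real.sqrt (k2 + x^2))) x := by
      have h : HasDerivAt (fun c : ℝ => (Real.sqrt (k2 + c^2) + 1) / 2)
          (1 / (2 * Real.sqrt (k2 + x^2)) * (2*x) / 2) x := (hsq.add_const 1).div_const 2
      convert h using 1
      field_simp
    have compB : HasDerivAt (fun c : ℝ => H2 ((Real.sqrt (k2 + c^2) + 1) / 2))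
        ((Real.log (1 - (Real.sqrt (k2 + x^2) + 1)/2) -
            Real.log ((Real.sqrt (k2 + x^2) + 1)/2)) / Real.log 2 *
          (x / (2 * Real.sqrt (k2 + x^2)))) x :=
      (hasDerivAt_H2 (by positivity) (by nlinarith)).comp x inner2
    rw [(by exact (compA.sub compB).deriv : deriv (fun c => H2 ((1 + c) / 2) - H2 ((Real.sqrt (k2 + c^2) + 1) / 2)) x = _)]
    -- rewrite the logs
    have e1 : (1:ℝ) - (1 + x)/2 = (1 - x)/2 := by ring
    have e2 : (1:ℝ) - (Real.sqrt (k2 + x^2) + 1)/2 = (1 - Real.sqrt (k2 + x^2))/2 := by ring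
    rw [e1, e2, Real.log_div (by linarith) two_ne_zero,
      Real.log_div (by linarith) two_ne_zero,
      Real.log_div (by linarith) two_ne_zero,
      Real.log_div (by nlinarith) two_ne_zero]
    have hkey := key_ineq hx0.le hrx hr1
    have hfinal :
        (Real.log (1 - x) - Real.log 2 - (Real.log (1 + x) - Real.log 2)) / Real.log 2 * (1/2) -
          (Real.log (1 - Real.sqrt (k2 + x^2)) - Real.log 2 -
            (Real.log (Real.sqrt (k2 + x^2) + 1) - Real.log 2)) / Real.log 2 *
          (x / (2 * Real.sqrt (k2 + x^2))) =
        (x * Lf (Real.sqrt (k2 + x^2)) - Real.sqrt (k2 + x^2) * Lf x) /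
          (2 * Real.sqrt (k2 + x^2) * Real.log 2) := by
      simp only [Lf]
      rw [show (1:ℝ) + Real.sqrt (k2 + x^2) = Real.sqrt (k2 + x^2) + 1 by ring]
      field_simp
      ring
    rw [hfinal]
    apply div_nonneg (by linarith) (by positivity)

lemma Cfun_z (px py p : ℝ) :
    Cfun px py p = H2 ((1 + (2*p - 1)) / 2) -
      H2 ((Real.sqrt (((2*px-1)^2 + (2*py-1)^2) + (2*p-1)^2) + 1) / 2) := by
  simp only [Cfun]
  rw [show (1 + (2*p - 1)) / 2 = p by ring,
    show ((2*px-1)^2 + (2*py-1)^2) + (2*p-1)^2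
      = 4*(px^2 + py^2 + p^2 - px - py - p) + 3 by ring]

lemma z_part (px py : ℝ) :
    MonotoneOn (fun pz => Cfun px py pz) {pz | Adm px py pz ∧ 1/2 ≤ pz} := by
  intro a ha b hb hab
  obtain ⟨haA, ha2⟩ := ha
  obtain ⟨hbA, hb2⟩ := hb
  have hk2 : (0:ℝ) ≤ (2*px-1)^2 + (2*py-1)^2 := by positivity
  have hmem : ∀ p : ℝ, Adm px py p → 1/2 ≤ p →
      (2*p - 1) ∈ Set.Icc (0:ℝ) (Real.sqrt (1 - ((2*px-1)^2 + (2*py-1)^2))) := by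
    intro p hA hp
    refine ⟨by linarith, ?_⟩
    have h1 : (2*p-1)^2 ≤ 1 - ((2*px-1)^2 + (2*py-1)^2) := by
      unfold Adm at hA; linarith
    calc 2*p - 1 = Real.sqrt ((2*p-1)^2) := (Real.sqrt_sq (by linarith)).symm
      _ ≤ _ := Real.sqrt_le_sqrt h1
  have h := z_mono ((2*px-1)^2 + (2*py-1)^2) hk2 (hmem a haA ha2) (hmem b hbA hb2)
    (by linarith : 2*a - 1 ≤ 2*b - 1)
  calc Cfun px py a = _ := Cfun_z px py a
    _ ≤ _ := h
    _ = Cfun px py b := (Cfun_z px py b).symm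

lemma x_part (py pz : ℝ) :
    MonotoneOn (fun px => Cfun px py pz) {px | Adm px py pz ∧ 1/2 ≤ px} := by
  intro a ha b hb hab
  obtain ⟨haA, ha2⟩ := ha
  obtain ⟨hbA, hb2⟩ := hb
  simp only [Cfun]
  rw [show 4*(a^2 + py^2 + pz^2 - a - py - pz) + 3
      = (2*a-1)^2 + ((2*py-1)^2 + (2*pz-1)^2) by ring,
    show 4*(b^2 + py^2 + pz^2 - b - py - pz) + 3
      = (2*b-1)^2 + ((2*py-1)^2 + (2*pz-1)^2) by ring]
  apply sub_le_sub_left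
  have hra : (0:ℝ) ≤ Real.sqrt ((2*a-1)^2 + ((2*py-1)^2 + (2*pz-1)^2)) := Real.sqrt_nonneg _
  have hd : (2*a-1)^2 + ((2*py-1)^2 + (2*pz-1)^2)
      ≤ (2*b-1)^2 + ((2*py-1)^2 + (2*pz-1)^2) := by nlinarith
  have hab' : Real.sqrt ((2*a-1)^2 + ((2*py-1)^2 + (2*pz-1)^2))
      ≤ Real.sqrt ((2*b-1)^2 + ((2*py-1)^2 + (2*pz-1)^2)) := Real.sqrt_le_sqrt hd
  have hb1 : Real.sqrt ((2*b-1)^2 + ((2*py-1)^2 + (2*pz-1)^2)) ≤ 1 := by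
    have h1 : (2*b-1)^2 + ((2*py-1)^2 + (2*pz-1)^2) ≤ 1 := by
      unfold Adm at hbA; linarith
    calc Real.sqrt _ ≤ Real.sqrt 1 := Real.sqrt_le_sqrt h1
      _ = 1 := Real.sqrt_one
  exact H2_antitoneOn
    ⟨by linarith, by linarith⟩
    ⟨by linarith [Real.sqrt_nonneg ((2*b-1)^2 + ((2*py-1)^2 + (2*pz-1)^2))], by linarith⟩
    (by linarith)

lemma y_part (px pz : ℝ) :
    MonotoneOn (fun py => Cfun px py pz) {py | Adm px py pz ∧ 1/2 ≤ py} := by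
  intro a ha b hb hab
  obtain ⟨haA, ha2⟩ := ha
  obtain ⟨hbA, hb2⟩ := hb
  simp only [Cfun]
  rw [show 4*(px^2 + a^2 + pz^2 - px - a - pz) + 3
      = (2*a-1)^2 + ((2*px-1)^2 + (2*pz-1)^2) by ring,
    show 4*(px^2 + b^2 + pz^2 - px - b - pz) + 3
      = (2*b-1)^2 + ((2*px-1)^2 + (2*pz-1)^2) by ring]
  apply sub_le_sub_left
  have hra : (0:ℝ) ≤ Real.sqrt ((2*a-1)^2 + ((2*px-1)^2 + (2*pz-1)^2)) := Real.sqrt_nonneg _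
  have hd : (2*a-1)^2 + ((2*px-1)^2 + (2*pz-1)^2)
      ≤ (2*b-1)^2 + ((2*px-1)^2 + (2*pz-1)^2) := by nlinarith
  have hab' : Real.sqrt ((2*a-1)^2 + ((2*px-1)^2 + (2*pz-1)^2))
      ≤ Real.sqrt ((2*b-1)^2 + ((2*px-1)^2 + (2*pz-1)^2)) := Real.sqrt_le_sqrt hd
  have hb1 : Real.sqrt ((2*b-1)^2 + ((2*px-1)^2 + (2*pz-1)^2)) ≤ 1 := by
    have h1 : (2*b-1)^2 + ((2*px-1)^2 + (2*pz-1)^2) ≤ 1 := by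
      unfold Adm at hbA; linarith
    calc Real.sqrt _ ≤ Real.sqrt 1 := Real.sqrt_le_sqrt h1
      _ = 1 := Real.sqrt_one
  exact H2_antitoneOn
    ⟨by linarith, by linarith⟩
    ⟨by linarith [Real.sqrt_nonneg ((2*b-1)^2 + ((2*px-1)^2 + (2*pz-1)^2))], by linarith⟩
    (by linarith)

lemma Cfun_rx (px py pz : ℝ) : Cfun (1 - px) py pz = Cfun px py pz := by
  simp only [Cfun]
  rw [show 4*((1-px)^2 + py^2 + pz^2 - (1-px) - py - pz) + 3
    = 4*(px^2 + py^2 + pz^2 - px - py - pz) + 3 by ring]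

lemma Cfun_ry (px py pz : ℝ) : Cfun px (1 - py) pz = Cfun px py pz := by
  simp only [Cfun]
  rw [show 4*(px^2 + (1-py)^2 + pz^2 - px - (1-py) - pz) + 3
    = 4*(px^2 + py^2 + pz^2 - px - py - pz) + 3 by ring]

lemma Cfun_rz (px py pz : ℝ) : Cfun px py (1 - pz) = Cfun px py pz := by
  simp only [Cfun]
  rw [show 4*(px^2 + py^2 + (1-pz)^2 - px - py - (1-pz)) + 3
    = 4*(px^2 + py^2 + pz^2 - px - py - pz) + 3 by ring, H2_one_sub]

lemma Adm_rx {px py pz : ℝ} (h : Adm px py pz) : Adm (1 - px) py pz := by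
  unfold Adm at h ⊢
  rw [show (2*(1-px)-1)^2 = (2*px-1)^2 by ring]
  exact h

lemma Adm_ry {px py pz : ℝ} (h : Adm px py pz) : Adm px (1 - py) pz := by
  unfold Adm at h ⊢
  rw [show (2*(1-py)-1)^2 = (2*py-1)^2 by ring]
  exact h

lemma Adm_rz {px py pz : ℝ} (h : Adm px py pz) : Adm px py (1 - pz) := by
  unfold Adm at h ⊢
  rw [show (2*(1-pz)-1)^2 = (2*pz-1)^2 by ring]
  exact h

lemma x_part' (py pz : ℝ) :
    AntitoneOn (fun px => Cfun px py pz) {px | Adm px py pz ∧ px ≤ 1/2} := by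
  intro a ha b hb hab
  have h := x_part py pz (Set.mem_setOf.2 ⟨Adm_rx hb.1, by linarith [hb.2]⟩)
    (Set.mem_setOf.2 ⟨Adm_rx ha.1, by linarith [ha.2]⟩) (by linarith : 1 - b ≤ 1 - a)
  simpa [Cfun_rx] using h

lemma y_part' (px pz : ℝ) :
    AntitoneOn (fun py => Cfun px py pz) {py | Adm px py pz ∧ py ≤ 1/2} := by
  intro a ha b hb hab
  have h := y_part px pz (Set.mem_setOf.2 ⟨Adm_ry hb.1, by linarith [hb.2]⟩)
    (Set.mem_setOf.2 ⟨Adm_ry ha.1, by linarith [ha.2]⟩) (by linarith : 1 - b ≤ 1 - a)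
  simpa [Cfun_ry] using h

lemma z_part' (px py : ℝ) :
    AntitoneOn (fun pz => Cfun px py pz) {pz | Adm px py pz ∧ pz ≤ 1/2} := by
  intro a ha b hb hab
  have h := z_part px py (Set.mem_setOf.2 ⟨Adm_rz hb.1, by linarith [hb.2]⟩)
    (Set.mem_setOf.2 ⟨Adm_rz ha.1, by linarith [ha.2]⟩) (by linarith : 1 - b ≤ 1 - a)
  simpa [Cfun_rz] using h

lemma Adm_hx {px py pz : ℝ} (h : Adm px py pz) : Adm (1/2) py pz := by
  unfold Adm at h ⊢
  nlinarith [sq_nonneg (2*px - 1)]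

lemma Adm_hy {px py pz : ℝ} (h : Adm px py pz) : Adm px (1/2) pz := by
  unfold Adm at h ⊢
  nlinarith [sq_nonneg (2*py - 1)]

lemma Adm_hz {px py pz : ℝ} (h : Adm px py pz) : Adm px py (1/2) := by
  unfold Adm at h ⊢
  nlinarith [sq_nonneg (2*pz - 1)]

/-- in each coordinate (the other two fixed), `C` is nonincreasing
on the admissible region where that coordinate is `≤ 1/2` and nondecreasing
where it is `≥ 1/2`; in particular its minimum over an admissible coordinate is
attained at `1/2`. -/
theorem stmt4 :
    (∀ py pz : ℝ,
      AntitoneOn (fun px => Cfun px py pz) {px | Adm px py pz ∧ px ≤ 1/2} ∧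
      MonotoneOn (fun px => Cfun px py pz) {px | Adm px py pz ∧ 1/2 ≤ px}) ∧
    (∀ px pz : ℝ,
      AntitoneOn (fun py => Cfun px py pz) {py | Adm px py pz ∧ py ≤ 1/2} ∧
      MonotoneOn (fun py => Cfun px py pz) {py | Adm px py pz ∧ 1/2 ≤ py}) ∧
    (∀ px py : ℝ,
      AntitoneOn (fun pz => Cfun px py pz) {pz | Adm px py pz ∧ pz ≤ 1/2} ∧
      MonotoneOn (fun pz => Cfun px py pz) {pz | Adm px py pz ∧ 1/2 ≤ pz}) ∧
    (∀ px py pz : ℝ, Adm px py pz →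
      Cfun (1/2) py pz ≤ Cfun px py pz ∧
      Cfun px (1/2) pz ≤ Cfun px py pz ∧
      Cfun px py (1/2) ≤ Cfun px py pz) := by
  refine ⟨fun py pz => ⟨x_part' py pz, x_part py pz⟩,
    fun px pz => ⟨y_part' px pz, y_part px pz⟩,
    fun px py => ⟨z_part' px py, z_part px py⟩, fun px py pz h => ⟨?_, ?_, ?_⟩⟩
  · rcases le_total px (1/2) with hle | hle
    · exact x_part' py pz (Set.mem_setOf.2 ⟨h, hle⟩)
        (Set.mem_setOf.2 ⟨Adm_hx h, le_refl _⟩) hle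
    · exact x_part py pz (Set.mem_setOf.2 ⟨Adm_hx h, le_refl _⟩)
        (Set.mem_setOf.2 ⟨h, hle⟩) hle
  · rcases le_total py (1/2) with hle | hle
    · exact y_part' px pz (Set.mem_setOf.2 ⟨h, hle⟩)
        (Set.mem_setOf.2 ⟨Adm_hy h, le_refl _⟩) hle
    · exact y_part px pz (Set.mem_setOf.2 ⟨Adm_hy h, le_refl _⟩)
        (Set.mem_setOf.2 ⟨h, hle⟩) hle
  · rcases le_total pz (1/2) with hle | hle
    · exact z_part' px py (Set.mem_setOf.2 ⟨h, hle⟩)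
        (Set.mem_setOf.2 ⟨Adm_hz h, le_refl _⟩) hle
    · exact z_part px py (Set.mem_setOf.2 ⟨Adm_hz h, le_refl _⟩)
        (Set.mem_setOf.2 ⟨h, hle⟩) hle
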